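/- arXiv:1010.6207 — 2 statements merged into one kernel-verified Lean document; each statement's English description precedes it below -/
import Mathlib

section
/- Let Ψ be an Orlicz function satisfying the Δ^2 condition: there exist α > 1 and x_0 > 0 with (Ψ(x))^2 ≤ Ψ(αx) for x ≥ x_0. Then Ψ satisfies: for every A > 0 there exist x_A > 0 and B ≥ A such that Ψ(A·Ψ^{-1}(x^2)) ≤ (Ψ(B·Ψ^{-1}(x)))^2 for all x ≥ x_A. -/
/-- An Orlicz function: convex, non-decreasing, vanishing only at `0`, tending to `∞`. -/
def OrliczFun (Ψ : ℝ → ℝ) : Prop :=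
  ConvexOn ℝ (Set.Ici 0) Ψ ∧ MonotoneOn Ψ (Set.Ici 0) ∧ Ψ 0 = 0 ∧
    (∀ x > (0:ℝ), 0 < Ψ x) ∧ Filter.Tendsto Ψ Filter.atTop Filter.atTop

theorem stmt_13 (Ψ Ψinv : ℝ → ℝ) (hΨ : OrliczFun Ψ)
    (hinv : ∀ t ≥ (0:ℝ), 0 ≤ Ψinv t ∧ Ψ (Ψinv t) = t)
    (α x₀ : ℝ) (hα : 1 < α) (hx₀ : 0 < x₀)
    (hΔsq : ∀ x ≥ x₀, (Ψ x) ^ 2 ≤ Ψ (α * x)) :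
    ∀ A > (0:ℝ), ∃ xA > (0:ℝ), ∃ B ≥ A,
      ∀ x ≥ xA, Ψ (A * Ψinv (x ^ 2)) ≤ (Ψ (B * Ψinv x)) ^ 2 := by
  obtain ⟨hconv, hmono, h0, hpos, -⟩ := hΨ
  intro A hA
  set B := max (α * A) α with hB
  have hαA : α * A ≤ B := le_max_left _ _
  have hαB : α ≤ B := le_max_right _ _
  have hB1 : 1 < B := lt_of_lt_of_le hα hαB
  refine ⟨max 1 (Ψ x₀ + 1), by positivity, B, ?_, ?_⟩
  · nlinarith
  intro x hx
  have hx1 : 1 ≤ x := le_trans (le_max_left _ _) hx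
  have hxΨ : Ψ x₀ + 1 ≤ x := le_trans (le_max_right _ _) hx
  have hxpos : (0:ℝ) < x := by linarith
  obtain ⟨hu0, hu⟩ := hinv x hxpos.le
  obtain ⟨hv0, hv⟩ := hinv (x ^ 2) (by positivity)
  set u := Ψinv x with hudef
  set v := Ψinv (x ^ 2) with hvdef
  -- u ≥ x₀
  have hux0 : x₀ ≤ u := by
    by_contra h
    push_neg at h
    have := hmono (Set.mem_Ici.mpr hu0) (Set.mem_Ici.mpr hx₀.le) h.le
    rw [hu] at this
    linarith
  have hupos : 0 < u := lt_of_lt_of_le hx₀ hux0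
  -- Δ² condition
  have hΔ : x ^ 2 ≤ Ψ (α * u) := by
    have := hΔsq u hux0
    rwa [hu] at this
  -- v ≤ α * u
  have hαu : 0 < α * u := by positivity
  have hvle : v ≤ α * u := by
    by_contra h
    push_neg at h
    have hvpos : 0 < v := lt_trans hαu h
    set b := α * u / v with hbdef
    have hb1 : b < 1 := (div_lt_one hvpos).mpr h
    have hb0 : 0 ≤ b := by positivity
    have key := hconv.2 (Set.self_mem_Ici (a := (0:ℝ))) (Set.mem_Ici.mpr hv0)
      (by linarith : (0:ℝ) ≤ 1 - b) hb0 (by ring)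
    simp only [smul_eq_mul, mul_zero, zero_add, h0] at key
    rw [div_mul_cancel₀ _ (ne_of_gt hvpos)] at key
    rw [hv] at key
    have hx2 : 0 < x ^ 2 := by positivity
    nlinarith
  -- main chain
  have h1 : Ψ (A * v) ≤ Ψ (B * u) := by
    apply hmono (Set.mem_Ici.mpr (by positivity)) (Set.mem_Ici.mpr (by positivity))
    calc A * v ≤ A * (α * u) := by nlinarith
      _ = (α * A) * u := by ring
      _ ≤ B * u := by nlinarith
  have h2 : x ≤ Ψ (B * u) := by
    rw [← hu]
    apply hmono (Set.mem_Ici.mpr hu0) (Set.mem_Ici.mpr (by positivity))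
    nlinarith
  have hge1 : 1 ≤ Ψ (B * u) := le_trans hx1 h2
  calc Ψ (A * v) ≤ Ψ (B * u) := h1
    _ ≤ (Ψ (B * u)) ^ 2 := by nlinarith
end

section
/- Let Ψ be an Orlicz function satisfying the Δ_2 condition: there exist C > 0 and x_0 > 0 with Ψ(2x) ≤ C·Ψ(x) for x ≥ x_0. Then for every A > 0 there exist x_A > 0 and B ≥ A such that Ψ(A·Ψ^{-1}(x^2)) ≤ (Ψ(B·Ψ^{-1}(x)))^2 for all x ≥ x_A. -/
theorem stmt_14 (Ψ Ψinv : ℝ → ℝ) (hΨ : OrliczFun Ψ)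
    (hinv : ∀ t ≥ (0:ℝ), 0 ≤ Ψinv t ∧ Ψ (Ψinv t) = t)
    (C x₀ : ℝ) (hC : 0 < C) (hx₀ : 0 < x₀)
    (hΔ2 : ∀ x ≥ x₀, Ψ (2 * x) ≤ C * Ψ x) :
    ∀ A > (0:ℝ), ∃ xA > (0:ℝ), ∃ B ≥ A,
      ∀ x ≥ xA, Ψ (A * Ψinv (x ^ 2)) ≤ (Ψ (B * Ψinv x)) ^ 2 := by
  obtain ⟨hconv, hmono, h0, hpos, _⟩ := hΨ
  have hnn : ∀ t : ℝ, 0 ≤ t → 0 ≤ Ψ t := fun t ht => by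
    have := hmono (Set.mem_Ici.mpr le_rfl) (Set.mem_Ici.mpr ht) ht
    linarith [h0 ▸ this]
  intro A hA
  set C₁ := max C 1 with hC₁def
  have hC₁1 : (1:ℝ) ≤ C₁ := le_max_right _ _
  obtain ⟨k, hk⟩ := pow_unbounded_of_one_lt A (by norm_num : (1:ℝ) < 2)
  set B := max A (C₁ ^ k) with hBdef
  have hCk1 : (1:ℝ) ≤ C₁ ^ k := one_le_pow₀ hC₁1
  have hB1 : (1:ℝ) ≤ B := le_trans hCk1 (le_max_right _ _)
  have hBCk : C₁ ^ k ≤ B := le_max_right _ _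
  refine ⟨max 1 (Ψ x₀ + 1), by positivity, B, le_max_left _ _, ?_⟩
  intro x hx
  have hx1 : (1:ℝ) ≤ x := le_trans (le_max_left _ _) hx
  have hxΨ : Ψ x₀ < x := lt_of_lt_of_le (by linarith) (le_trans (le_max_right _ _) hx)
  have hx0 : (0:ℝ) < x := by linarith
  have hx2 : (0:ℝ) ≤ x ^ 2 := sq_nonneg x
  obtain ⟨hu0, huΨ⟩ := hinv (x ^ 2) hx2
  obtain ⟨hv0, hvΨ⟩ := hinv x hx0.le
  set u := Ψinv (x ^ 2) with hu
  set v := Ψinv x with hv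
  -- u ≥ x₀
  have hux₀ : x₀ ≤ u := by
    by_contra h
    push_neg at h
    have := hmono (Set.mem_Ici.mpr hu0) (Set.mem_Ici.mpr hx₀.le) h.le
    rw [huΨ] at this
    nlinarith
  have hu0' : (0:ℝ) < u := lt_of_lt_of_le hx₀ hux₀
  -- iterated Δ₂
  have hΔ : ∀ j : ℕ, Ψ (2 ^ j * u) ≤ C₁ ^ j * Ψ u := by
    intro j
    induction j with
    | zero => simp
    | succ j ih =>
      have h2j : (1:ℝ) ≤ 2 ^ j := one_le_pow₀ (by norm_num)
      have h2ju : x₀ ≤ 2 ^ j * u :=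
        le_trans hux₀ (le_mul_of_one_le_left hu0'.le h2j)
      have h2junn : (0:ℝ) ≤ 2 ^ j * u := by positivity
      calc Ψ (2 ^ (j + 1) * u) = Ψ (2 * (2 ^ j * u)) := by ring_nf
        _ ≤ C * Ψ (2 ^ j * u) := hΔ2 _ h2ju
        _ ≤ C₁ * (C₁ ^ j * Ψ u) :=
            mul_le_mul (le_max_left _ _) ih (hnn _ h2junn) (by linarith)
        _ = C₁ ^ (j + 1) * Ψ u := by ring
  -- left side bound
  have hAu : Ψ (A * u) ≤ C₁ ^ k * x ^ 2 := by
    have h1 : A * u ≤ 2 ^ k * u := mul_le_mul_of_nonneg_right hk.le hu0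
    have h2 : Ψ (A * u) ≤ Ψ (2 ^ k * u) :=
      hmono (Set.mem_Ici.mpr (by positivity)) (Set.mem_Ici.mpr (by positivity)) h1
    calc Ψ (A * u) ≤ Ψ (2 ^ k * u) := h2
      _ ≤ C₁ ^ k * Ψ u := hΔ k
      _ = C₁ ^ k * x ^ 2 := by rw [huΨ]
  -- superadditivity: B * Ψ v ≤ Ψ (B * v)
  have hBv : B * Ψ v ≤ Ψ (B * v) := by
    have hB0 : (0:ℝ) < B := by linarith
    have hmem0 : (0:ℝ) ∈ Set.Ici (0:ℝ) := Set.mem_Ici.mpr le_rfl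
    have hmemBv : B * v ∈ Set.Ici (0:ℝ) := Set.mem_Ici.mpr (by positivity)
    have hw1 : (0:ℝ) ≤ 1 - 1 / B := by
      have : 1 / B ≤ 1 := by
        rw [div_le_one hB0]; exact hB1
      linarith
    have hw2 : (0:ℝ) ≤ 1 / B := by positivity
    have hsum : (1 - 1 / B) + 1 / B = 1 := by ring
    have := hconv.2 hmem0 hmemBv hw1 hw2 hsum
    have heq : (1 - 1 / B) • (0:ℝ) + (1 / B) • (B * v) = v := by
      rw [smul_eq_mul, smul_eq_mul, mul_zero, zero_add, ← mul_assoc, one_div, inv_mul_cancel₀ hB0.ne', one_mul]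
    rw [heq] at this
    have : Ψ v ≤ (1 - 1 / B) * Ψ 0 + (1 / B) * Ψ (B * v) := this
    rw [h0] at this
    have h2 : Ψ v ≤ (1 / B) * Ψ (B * v) := by linarith
    calc B * Ψ v ≤ B * ((1 / B) * Ψ (B * v)) :=
          mul_le_mul_of_nonneg_left h2 hB0.le
      _ = Ψ (B * v) := by field_simp
  -- conclude
  have hΨv : Ψ v = x := hvΨ
  have hBx : B * x ≤ Ψ (B * v) := by rw [← hΨv]; exact hBv
  have hBxnn : (0:ℝ) ≤ B * x := by positivity
  have hsq : (B * x) ^ 2 ≤ (Ψ (B * v)) ^ 2 := pow_le_pow_left₀ hBxnn hBx 2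
  have hB2 : C₁ ^ k ≤ B ^ 2 := by nlinarith
  have hfinal : C₁ ^ k * x ^ 2 ≤ (B * x) ^ 2 := by
    have := mul_le_mul_of_nonneg_right hB2 hx2
    nlinarith
  calc Ψ (A * u) ≤ C₁ ^ k * x ^ 2 := hAu
    _ ≤ (B * x) ^ 2 := hfinal
    _ ≤ (Ψ (B * v)) ^ 2 := hsq
end
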